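/- (Transition regime: vanishing fraction but growing number of outlier components.) In the high-dimensional geometric setting, assume K^{(d)} → ∞, K^{(d)}/d → 0, and K^{(d)} τ^{(d)}/d → r ∈ [0,∞) as d → ∞. Then almost surely (1/d) ‖X'^{(d)}‖² → r + σ² and (1/d) ‖X^{(d)} − X'^{(d)}‖² → r + 2σ² as d → ∞; in particular, if r = 0 the outlier asymptotically lies on the same sphere of radius (σ² d)^{1/2} as the inliers, while if r > 0 it is asymptotically separated from it. -/

import Mathlib

open MeasureTheory ProbabilityTheory Filter Finset Asymptotics ENNReal
open Finset

lemma exists_enum (Iout : ℕ → Finset ℕ) (hInested : ∀ m, Iout m ⊆ Iout (m + 1))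
    (hKinf : ∀ n : ℕ, ∃ m, n ≤ (Iout m).card) :
    ∃ e : ℕ → ℕ, Function.Injective e ∧
      ∀ m, Iout m = (Finset.range (Iout m).card).image e := by
  classical
  have hmono : Monotone Iout := monotone_nat_of_le_succ hInested
  set t : ℕ → ℕ := fun i => sInf {m | i ∈ Iout m} with ht_def
  have ht_mem : ∀ {i m : ℕ}, i ∈ Iout m → i ∈ Iout (t i) := by
    intro i m h
    exact Nat.sInf_mem (⟨m, h⟩ : Set.Nonempty {m | i ∈ Iout m})
  have ht_le : ∀ {i m : ℕ}, i ∈ Iout m → t i ≤ m := fun h => Nat.sInf_le h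
  set key : ℕ → ℕ ×ₗ ℕ := fun i => toLex (t i, i) with hkey_def
  have hkey_inj : Function.Injective key := by
    intro a b hab
    have := congrArg (fun p => (ofLex p).2) hab
    simpa [hkey_def] using this
  have hkey_fst : ∀ {i j : ℕ}, key i ≤ key j → t i ≤ t j := by
    intro i j h
    rcases Prod.Lex.le_iff.1 h with h' | ⟨h1, _⟩
    · exact le_of_lt h'
    · exact le_of_eq h1
  set Ψ : ℕ → Finset ℕ := fun i => (Iout (t i)).filter (fun j => key j ≤ key i) with hΨ_def
  set ψ : ℕ → ℕ := fun i => (Ψ i).card with hψ_def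
  have hsub : ∀ {m i : ℕ}, i ∈ Iout m → Ψ i ⊆ Iout m := by
    intro m i hi j hj
    exact hmono (ht_le hi) ((Finset.mem_filter.1 hj).1)
  have hmem_self : ∀ {m i : ℕ}, i ∈ Iout m → i ∈ Ψ i := by
    intro m i hi
    exact Finset.mem_filter.2 ⟨ht_mem hi, le_rfl⟩
  have hψ_lt : ∀ {m m' i i' : ℕ}, i ∈ Iout m → i' ∈ Iout m' → key i < key i' → ψ i < ψ i' := by
    intro m m' i i' hi hi' hk
    have hss : Ψ i ⊂ Ψ i' := by
      constructor
      · intro j hj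
        rcases Finset.mem_filter.1 hj with ⟨hj1, hj2⟩
        refine Finset.mem_filter.2 ⟨?_, hj2.trans hk.le⟩
        exact hmono (hkey_fst hk.le) hj1
      · intro hcon
        have : i' ∈ Ψ i := hcon (hmem_self hi')
        have := (Finset.mem_filter.1 this).2
        exact absurd this (not_le.2 hk)
    exact Finset.card_lt_card hss
  have himage : ∀ m, (Iout m).image ψ = Finset.Icc 1 (Iout m).card := by
    intro m
    have hinj : Set.InjOn ψ (Iout m) := by
      intro a ha b hb hab
      by_contra hne
      rcases lt_trichotomy (key a) (key b) with h | h | h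
      · exact absurd hab (Nat.ne_of_lt (hψ_lt ha hb h))
      · exact hne (hkey_inj h)
      · exact absurd hab.symm (Nat.ne_of_lt (hψ_lt hb ha h))
    have hsubset : (Iout m).image ψ ⊆ Finset.Icc 1 (Iout m).card := by
      intro n hn
      rcases Finset.mem_image.1 hn with ⟨i, hi, rfl⟩
      refine Finset.mem_Icc.2 ⟨?_, ?_⟩
      · exact Finset.card_pos.2 ⟨i, hmem_self hi⟩
      · exact Finset.card_le_card (hsub hi)
    have hcard : ((Iout m).image ψ).card = (Iout m).card := Finset.card_image_of_injOn hinj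
    refine Finset.eq_of_subset_of_card_le hsubset ?_
    rw [hcard, Nat.card_Icc]
    omega
  have hconsist : ∀ {m m' i i' : ℕ}, i ∈ Iout m → i' ∈ Iout m' → ψ i = ψ i' → i = i' := by
    intro m m' i i' hi hi' hψeq
    by_contra hne
    rcases lt_trichotomy (key i) (key i') with h | h | h
    · exact absurd hψeq (Nat.ne_of_lt (hψ_lt hi hi' h))
    · exact hne (hkey_inj h)
    · exact absurd hψeq.symm (Nat.ne_of_lt (hψ_lt hi' hi h))
  -- define e
  have hex : ∀ n : ℕ, ∃ i, (∃ m, i ∈ Iout m) ∧ ψ i = n + 1 := by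
    intro n
    obtain ⟨m, hm⟩ := hKinf (n + 1)
    have : n + 1 ∈ Finset.Icc 1 (Iout m).card := Finset.mem_Icc.2 ⟨Nat.succ_le_succ (Nat.zero_le n), hm⟩
    rw [← himage m] at this
    rcases Finset.mem_image.1 this with ⟨i, hi, hψi⟩
    exact ⟨i, ⟨m, hi⟩, hψi⟩
  set e : ℕ → ℕ := fun n => (hex n).choose with he_def
  have he_mem : ∀ n, ∃ m, e n ∈ Iout m := fun n => (hex n).choose_spec.1
  have he_ψ : ∀ n, ψ (e n) = n + 1 := fun n => (hex n).choose_spec.2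
  refine ⟨e, ?_, ?_⟩
  · intro a b hab
    have := congrArg ψ hab
    rw [he_ψ, he_ψ] at this
    omega
  · intro m
    apply Finset.Subset.antisymm
    · intro i hi
      have h1 : ψ i ∈ Finset.Icc 1 (Iout m).card := by
        rw [← himage m]; exact Finset.mem_image_of_mem ψ hi
      rcases Finset.mem_Icc.1 h1 with ⟨hge, hle⟩
      refine Finset.mem_image.2 ⟨ψ i - 1, Finset.mem_range.2 (by omega), ?_⟩
      obtain ⟨m', hm'⟩ := he_mem (ψ i - 1)
      refine hconsist hm' hi ?_
      rw [he_ψ]; omega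
    · intro i hi
      rcases Finset.mem_image.1 hi with ⟨n, hn, rfl⟩
      have hn' : n + 1 ∈ Finset.Icc 1 (Iout m).card :=
        Finset.mem_Icc.2 ⟨Nat.succ_le_succ (Nat.zero_le n), Finset.mem_range.1 hn⟩
      rw [← himage m] at hn'
      rcases Finset.mem_image.1 hn' with ⟨j, hj, hψj⟩
      obtain ⟨m', hm'⟩ := he_mem n
      have : j = e n := hconsist hj hm' (by rw [he_ψ, hψj])
      rwa [← this]
open MeasureTheory ProbabilityTheory Real Filter
set_option maxHeartbeats 1000000

lemma aux_tendsto (l : Filter ℝ) (hl : l ≤ Filter.cocompact ℝ) :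
    Tendsto (fun x : ℝ => x * Real.exp (-(2⁻¹ : ℝ) * x ^ 2)) l (nhds 0) := by
  have h := tendsto_rpow_abs_mul_exp_neg_mul_sq_cocompact (a := (2⁻¹ : ℝ)) (by norm_num) 1
  have h2 : Tendsto (fun x : ℝ => |x| ^ (1:ℝ) * Real.exp (-2⁻¹ * x ^ 2)) l (nhds 0) :=
    h.mono_left hl
  have h3 : Tendsto (abs ∘ (fun x : ℝ => x * Real.exp (-(2⁻¹:ℝ) * x ^ 2))) l (nhds 0) := by
    refine h2.congr' ?_
    filter_upwards with x
    simp only [Function.comp_apply]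
    rw [Real.rpow_one, abs_mul, abs_of_pos (Real.exp_pos _)]
  exact (tendsto_zero_iff_abs_tendsto_zero _).2 h3

lemma aux_integrable_exp : Integrable (fun x : ℝ => Real.exp (-(2⁻¹:ℝ) * x ^ 2)) :=
  integrable_exp_neg_mul_sq (by norm_num)

lemma aux_integrable_sq :
    Integrable (fun x : ℝ => x ^ 2 * Real.exp (-(2⁻¹ : ℝ) * x ^ 2)) := by
  have := integrable_rpow_mul_exp_neg_mul_sq (b := (2⁻¹ : ℝ)) (by norm_num) (s := 2) (by norm_num)
  refine this.congr ?_
  filter_upwards with x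
  rw [show ((2:ℝ)) = ((2:ℕ):ℝ) by norm_num, Real.rpow_natCast]

lemma aux_integrable_id :
    Integrable (fun x : ℝ => x * Real.exp (-(2⁻¹ : ℝ) * x ^ 2)) :=
  integrable_mul_exp_neg_mul_sq (by norm_num)

lemma aux_integral_sq :
    ∫ x : ℝ, x ^ 2 * Real.exp (-(2⁻¹ : ℝ) * x ^ 2) = Real.sqrt (2 * π) := by
  have hderiv : ∀ x : ℝ, HasDerivAt (fun y : ℝ => -y * Real.exp (-(2⁻¹:ℝ) * y ^ 2))
      ((x ^ 2 - 1) * Real.exp (-(2⁻¹:ℝ) * x ^ 2)) x := by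
    intro x
    have h1 : HasDerivAt (fun y : ℝ => -(2⁻¹:ℝ) * y ^ 2) (-(2⁻¹:ℝ) * (2 * x)) x := by
      simpa using ((hasDerivAt_pow 2 x)).const_mul (-(2⁻¹:ℝ))
    have h2 : HasDerivAt (fun y : ℝ => Real.exp (-(2⁻¹:ℝ) * y ^ 2))
        (Real.exp (-(2⁻¹:ℝ) * x ^ 2) * (-(2⁻¹:ℝ) * (2 * x))) x := h1.exp
    have h3 := ((hasDerivAt_id x).neg).mul h2
    refine h3.congr_deriv ?_
    simp only [Pi.neg_apply, id_eq]
    ring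
  have hint : Integrable (fun x : ℝ => (x ^ 2 - 1) * Real.exp (-(2⁻¹:ℝ) * x ^ 2)) := by
    refine (aux_integrable_sq.sub aux_integrable_exp).congr ?_
    filter_upwards with x
    simp only [Pi.sub_apply]
    ring
  have hft := (aux_tendsto atTop (le_sup_right.trans_eq cocompact_eq_atBot_atTop.symm)).neg
  have hfb := (aux_tendsto atBot (le_sup_left.trans_eq cocompact_eq_atBot_atTop.symm)).neg
  have heq := integral_of_hasDerivAt_of_tendsto hderiv hint (by simpa using hfb) (by simpa using hft)
  rw [sub_zero] at heq
  have hsplit : ∫ x : ℝ, (x ^ 2 - 1) * Real.exp (-(2⁻¹:ℝ) * x ^ 2)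
      = (∫ x : ℝ, x ^ 2 * Real.exp (-(2⁻¹:ℝ) * x ^ 2)) - ∫ x : ℝ, Real.exp (-(2⁻¹:ℝ) * x ^ 2) := by
    rw [← integral_sub aux_integrable_sq aux_integrable_exp]
    congr 1; funext x; ring
  have hgauss := integral_gaussian (2⁻¹ : ℝ)
  rw [hsplit, hgauss] at heq
  have : (π / 2⁻¹ : ℝ) = 2 * π := by ring
  rw [this] at heq
  linarith [heq]

lemma aux_integral_id :
    ∫ x : ℝ, x * Real.exp (-(2⁻¹ : ℝ) * x ^ 2) = 0 := by
  have hderiv : ∀ x : ℝ, HasDerivAt (fun y : ℝ => -Real.exp (-(2⁻¹:ℝ) * y ^ 2))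
      (x * Real.exp (-(2⁻¹:ℝ) * x ^ 2)) x := by
    intro x
    have h1 : HasDerivAt (fun y : ℝ => -(2⁻¹:ℝ) * y ^ 2) (-(2⁻¹:ℝ) * (2 * x)) x := by
      simpa using ((hasDerivAt_pow 2 x)).const_mul (-(2⁻¹:ℝ))
    have h2 := h1.exp.neg
    refine h2.congr_deriv ?_
    ring
  have hsq_top : Tendsto (fun x : ℝ => x ^ 2) atTop atTop := tendsto_pow_atTop (by norm_num : (2:ℕ) ≠ 0)
  have hsq_bot : Tendsto (fun x : ℝ => x ^ 2) atBot atTop := by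
    have := (tendsto_pow_atTop (n := 2) (by norm_num : (2:ℕ) ≠ 0)).comp (tendsto_abs_atBot_atTop (G := ℝ))
    refine this.congr fun x => ?_
    simp [Function.comp, sq_abs]
  have harg : ∀ (l : Filter ℝ), Tendsto (fun x : ℝ => x ^ 2) l atTop →
      Tendsto (fun x : ℝ => -Real.exp (-(2⁻¹:ℝ) * x ^ 2)) l (nhds 0) := by
    intro l hl
    have h1 : Tendsto (fun x : ℝ => -(2⁻¹:ℝ) * x ^ 2) l atBot := by
      have h2 : Tendsto (fun x : ℝ => (2⁻¹:ℝ) * x ^ 2) l atTop :=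
        hl.const_mul_atTop (by norm_num)
      have := tendsto_neg_atTop_atBot.comp h2
      refine this.congr fun x => ?_
      simp [Function.comp]
    have := (Real.tendsto_exp_atBot.comp h1).neg
    simpa using this
  have heq := integral_of_hasDerivAt_of_tendsto hderiv aux_integrable_id
    (harg atBot hsq_bot) (harg atTop hsq_top)
  simpa using heq
open MeasureTheory ProbabilityTheory Real Filter
open scoped ENNReal NNReal


lemma gaussPDFReal_eq (x : ℝ) :
    gaussianPDFReal 0 1 x = (Real.sqrt (2 * π))⁻¹ * Real.exp (-(2⁻¹:ℝ) * x ^ 2) := by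
  rw [gaussianPDFReal]
  have h1 : (2 * π * ((1:ℝ≥0):ℝ)) = 2 * π := by norm_num
  have h2 : -(x - 0) ^ 2 / (2 * ((1:ℝ≥0):ℝ)) = -(2⁻¹:ℝ) * x ^ 2 := by norm_num; ring
  rw [h1, h2]

lemma gaussReal_eq_withDensity :
    gaussianReal 0 1 = MeasureTheory.Measure.withDensity volume
      (fun x => ((Real.toNNReal (gaussianPDFReal 0 1 x) : ℝ≥0) : ℝ≥0∞)) := by
  rw [gaussianReal_of_var_ne_zero 0 one_ne_zero]
  rfl

lemma meas_toNN : Measurable (fun x => Real.toNNReal (gaussianPDFReal 0 1 x)) :=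
  (measurable_gaussianPDFReal 0 1).real_toNNReal

lemma integral_gaussReal (g : ℝ → ℝ) :
    ∫ x, g x ∂(gaussianReal 0 1) = ∫ x, gaussianPDFReal 0 1 x * g x := by
  rw [gaussReal_eq_withDensity, integral_withDensity_eq_integral_smul meas_toNN]
  congr 1
  funext x
  rw [NNReal.smul_def, Real.coe_toNNReal _ (gaussianPDFReal_nonneg 0 1 x), smul_eq_mul]

lemma integrable_gaussReal_iff (g : ℝ → ℝ) :
    Integrable g (gaussianReal 0 1) ↔ Integrable (fun x => gaussianPDFReal 0 1 x * g x) := by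
  rw [gaussReal_eq_withDensity, integrable_withDensity_iff_integrable_smul meas_toNN]
  constructor <;> intro h <;> refine h.congr ?_ <;> filter_upwards with x <;>
    rw [NNReal.smul_def, Real.coe_toNNReal _ (gaussianPDFReal_nonneg 0 1 x), smul_eq_mul]

lemma sqrt_two_pi_pos : 0 < Real.sqrt (2 * π) := Real.sqrt_pos.2 (by positivity)

lemma integrable_sq_gaussReal : Integrable (fun x : ℝ => x ^ 2) (gaussianReal 0 1) := by
  rw [integrable_gaussReal_iff]
  have := aux_integrable_sq.const_mul (Real.sqrt (2 * π))⁻¹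
  refine this.congr ?_
  filter_upwards with x
  rw [gaussPDFReal_eq]
  ring

lemma integrable_id_gaussReal : Integrable (fun x : ℝ => x) (gaussianReal 0 1) := by
  rw [integrable_gaussReal_iff]
  have := aux_integrable_id.const_mul (Real.sqrt (2 * π))⁻¹
  refine this.congr ?_
  filter_upwards with x
  rw [gaussPDFReal_eq]
  ring

lemma integral_sq_gaussReal : ∫ x, x ^ 2 ∂(gaussianReal 0 1) = 1 := by
  rw [integral_gaussReal]
  have : ∀ x : ℝ, gaussianPDFReal 0 1 x * x ^ 2
      = (Real.sqrt (2 * π))⁻¹ * (x ^ 2 * Real.exp (-(2⁻¹:ℝ) * x ^ 2)) := by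
    intro x; rw [gaussPDFReal_eq]; ring
  simp_rw [this]
  rw [integral_const_mul, aux_integral_sq, inv_mul_cancel₀ (ne_of_gt sqrt_two_pi_pos)]

lemma integral_id_gaussReal : ∫ x, x ∂(gaussianReal 0 1) = 0 := by
  rw [integral_gaussReal]
  have : ∀ x : ℝ, gaussianPDFReal 0 1 x * x
      = (Real.sqrt (2 * π))⁻¹ * (x * Real.exp (-(2⁻¹:ℝ) * x ^ 2)) := by
    intro x; rw [gaussPDFReal_eq]; ring
  simp_rw [this]
  rw [integral_const_mul, aux_integral_id, mul_zero]


/-- `a ≻ b`: the ratio `a n / b n` tends to a limit in `(1, ∞]`. -/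
def SuccSeq (a b : ℕ → ℝ) : Prop :=
  (∃ L : ℝ, 1 < L ∧ Filter.Tendsto (fun n => a n / b n) Filter.atTop (nhds L)) ∨
    Filter.Tendsto (fun n => a n / b n) Filter.atTop Filter.atTop

theorem stmt18
    {Ω : Type} [MeasureSpace Ω] [IsProbabilityMeasure (ℙ : Measure Ω)]
    (σ : ℝ) (hσ : 0 < σ)
    (z z' : ℕ → Ω → ℝ)
    (hzmeas : ∀ i, Measurable (z i)) (hzmeas' : ∀ i, Measurable (z' i))
    (hindep : iIndepFun (Sum.elim z z') ℙ)
    (hgauss : ∀ i, Measure.map (z i) ℙ = gaussianReal 0 1)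
    (hgauss' : ∀ i, Measure.map (z' i) ℙ = gaussianReal 0 1)
    (Iout : ℕ → Finset ℕ)
    (hIsub : ∀ m, Iout m ⊆ Finset.Icc 1 m)
    (hInested : ∀ m, Iout m ⊆ Iout (m + 1))
    (τ : ℕ → ℝ) (hτpos : ∀ m, 0 < τ m)
    (hKinf : Tendsto (fun m => (Iout m).card) atTop atTop)
    (hK0 : Tendsto (fun m => ((Iout m).card : ℝ) / m) atTop (nhds 0))
    (r : ℝ) (hr0 : 0 ≤ r)
    (hr : Tendsto (fun m => ((Iout m).card : ℝ) * τ m / m) atTop (nhds r)) :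
    ∀ᵐ ω ∂ℙ,
      Tendsto (fun m =>
          (∑ i ∈ Finset.Icc 1 m,
            (if i ∈ Iout m then Real.sqrt (τ m) * z' i ω else σ * z' i ω) ^ 2) / m)
        atTop (nhds (r + σ ^ 2)) ∧
      Tendsto (fun m =>
          (∑ i ∈ Finset.Icc 1 m,
            (σ * z i ω -
              (if i ∈ Iout m then Real.sqrt (τ m) * z' i ω else σ * z' i ω)) ^ 2) / m)
        atTop (nhds (r + 2 * σ ^ 2)) := by
  classical
  -- enumeration of the nested outlier sets
  obtain ⟨e, he_inj, he_im⟩ := exists_enum Iout hInested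
    (fun n => (hKinf.eventually (eventually_ge_atTop n)).exists)
  set K : ℕ → ℕ := fun m => (Iout m).card with hK_def
  -- moments
  have hmom : ∀ (X : Ω → ℝ), Measurable X → Measure.map X ℙ = gaussianReal 0 1 →
      Integrable (fun ω => X ω ^ 2) ℙ ∧ (∫ ω, X ω ^ 2 ∂ℙ) = 1 ∧
      Integrable X ℙ ∧ (∫ ω, X ω ∂ℙ) = 0 := by
    intro X hXm hXg
    have haem : AEMeasurable X ℙ := hXm.aemeasurable
    have h1 : Integrable (fun ω => X ω ^ 2) ℙ := by
      have := integrable_sq_gaussReal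
      rw [← hXg] at this
      exact (integrable_map_measure
        (by exact (measurable_id.pow_const 2).aestronglyMeasurable) haem).1 this
    have h2 : (∫ ω, X ω ^ 2 ∂ℙ) = 1 := by
      have h := integral_sq_gaussReal
      rw [← hXg, integral_map haem
        (by exact (measurable_id.pow_const 2).aestronglyMeasurable)] at h
      exact h
    have h3 : Integrable X ℙ := by
      have := integrable_id_gaussReal
      rw [← hXg] at this
      exact (integrable_map_measure
        (by exact measurable_id.aestronglyMeasurable) haem).1 this
    have h4 : (∫ ω, X ω ∂ℙ) = 0 := by
      have h := integral_id_gaussReal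
      rw [← hXg, integral_map haem
        (by exact measurable_id.aestronglyMeasurable)] at h
      exact h
    exact ⟨h1, h2, h3, h4⟩
  have hz_mom := fun i => hmom (z i) (hzmeas i) (hgauss i)
  have hz'_mom := fun i => hmom (z' i) (hzmeas' i) (hgauss' i)
  -- measurability of the joint family
  have hf_meas : ∀ i : ℕ ⊕ ℕ, Measurable (Sum.elim z z' i) := by
    intro i
    cases i with
    | inl a => exact hzmeas a
    | inr a => exact hzmeas' a
  have hmul_meas : Measurable (fun p : ℝ × ℝ => p.1 * p.2) :=
    measurable_fst.mul measurable_snd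
  have hsubsq_meas : Measurable (fun p : ℝ × ℝ => (p.1 - p.2) ^ 2) :=
    (measurable_fst.sub measurable_snd).pow_const 2
  have hindep_zz' : ∀ i, IndepFun (z i) (z' i) ℙ := by
    intro i
    exact hindep.indepFun (show (Sum.inl i : ℕ ⊕ ℕ) ≠ Sum.inr i by simp)
  have hpair_indep : ∀ i j, i ≠ j →
      IndepFun (fun ω => (z i ω, z' i ω)) (fun ω => (z j ω, z' j ω)) ℙ := by
    intro i j hij
    exact hindep.indepFun_prodMk_prodMk hf_meas (Sum.inl i) (Sum.inr i) (Sum.inl j) (Sum.inr j)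
      (by simp [hij]) (by simp) (by simp) (by simp [hij])
  have hpair_map : ∀ i, Measure.map (fun ω => (z i ω, z' i ω)) ℙ
      = (gaussianReal 0 1).prod (gaussianReal 0 1) := by
    intro i
    rw [(indepFun_iff_map_prod_eq_prod_map_map (hzmeas i).aemeasurable
      (hzmeas' i).aemeasurable).1 (hindep_zz' i), hgauss i, hgauss' i]
  have hpair_ident : ∀ i j, IdentDistrib (fun ω => (z i ω, z' i ω))
      (fun ω => (z j ω, z' j ω)) ℙ ℙ := by
    intro i j
    exact ⟨((hzmeas i).prodMk (hzmeas' i)).aemeasurable,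
      ((hzmeas j).prodMk (hzmeas' j)).aemeasurable, by rw [hpair_map, hpair_map]⟩
  have hident_z : ∀ i j, IdentDistrib (z i) (z j) ℙ ℙ := fun i j =>
    ⟨(hzmeas i).aemeasurable, (hzmeas j).aemeasurable, by rw [hgauss, hgauss]⟩
  have hident_z' : ∀ i j, IdentDistrib (z' i) (z' j) ℙ ℙ := fun i j =>
    ⟨(hzmeas' i).aemeasurable, (hzmeas' j).aemeasurable, by rw [hgauss', hgauss']⟩
  -- product moments
  have hzz'_int : ∀ i, Integrable (fun ω => z i ω * z' i ω) ℙ := fun i =>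
    (hindep_zz' i).integrable_mul (hz_mom i).2.2.1 (hz'_mom i).2.2.1
  have hzz'_exp : ∀ i, (∫ ω, z i ω * z' i ω ∂ℙ) = 0 := by
    intro i
    have h := (hindep_zz' i).integral_mul_eq_mul_integral (hz_mom i).2.2.1.1 (hz'_mom i).2.2.1.1
    have h2 : (∫ ω, z i ω * z' i ω ∂ℙ) = (∫ ω, z i ω ∂ℙ) * ∫ ω, z' i ω ∂ℙ := h
    rw [h2, (hz_mom i).2.2.2, (hz'_mom i).2.2.2, mul_zero]
  have hsub_eq : ∀ i, (fun ω => (z i ω - z' i ω) ^ 2)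
      = fun ω => z i ω ^ 2 + z' i ω ^ 2 - 2 * (z i ω * z' i ω) := by
    intro i; funext ω; ring
  have hsub_int : ∀ i, Integrable (fun ω => (z i ω - z' i ω) ^ 2) ℙ := by
    intro i
    rw [hsub_eq i]
    exact ((hz_mom i).1.add (hz'_mom i).1).sub ((hzz'_int i).const_mul 2)
  have hsub_exp : ∀ i, (∫ ω, (z i ω - z' i ω) ^ 2 ∂ℙ) = 2 := by
    intro i
    rw [hsub_eq i, integral_sub
      (by exact (hz_mom i).1.add (hz'_mom i).1 :
        Integrable (fun ω => z i ω ^ 2 + z' i ω ^ 2) ℙ)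
      (by exact (hzz'_int i).const_mul 2 :
        Integrable (fun ω => 2 * (z i ω * z' i ω)) ℙ),
      integral_add (hz_mom i).1 (hz'_mom i).1, integral_const_mul, (hz_mom i).2.1,
      (hz'_mom i).2.1, hzz'_exp i]
    norm_num
  -- the five strong laws
  have E1 : ∀ᵐ ω ∂ℙ, Tendsto (fun n : ℕ =>
      (∑ i ∈ range n, (z' (i + 1) ω) ^ 2) / n) atTop (nhds 1) := by
    have h := strong_law_ae_real (fun n ω => (z' (n + 1) ω) ^ 2) (hz'_mom (0 + 1)).1
      (fun i j hij => by
        exact ((hindep.indepFun (show (Sum.inr (i+1) : ℕ ⊕ ℕ) ≠ Sum.inr (j+1) by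
          simp [Nat.add_one_inj]; omega)).comp
          (measurable_id.pow_const 2) (measurable_id.pow_const 2)))
      (fun i => (hident_z' (i + 1) (0 + 1)).comp (measurable_id.pow_const 2))
    rwa [(hz'_mom (0 + 1)).2.1] at h
  have E2 : ∀ᵐ ω ∂ℙ, Tendsto (fun n : ℕ =>
      (∑ i ∈ range n, (z' (e i) ω) ^ 2) / n) atTop (nhds 1) := by
    have h := strong_law_ae_real (fun n ω => (z' (e n) ω) ^ 2) (hz'_mom (e 0)).1
      (fun i j hij => by
        exact ((hindep.indepFun (show (Sum.inr (e i) : ℕ ⊕ ℕ) ≠ Sum.inr (e j) by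
          simp [he_inj.ne hij])).comp
          (measurable_id.pow_const 2) (measurable_id.pow_const 2)))
      (fun i => (hident_z' (e i) (e 0)).comp (measurable_id.pow_const 2))
    rwa [(hz'_mom (e 0)).2.1] at h
  have E3 : ∀ᵐ ω ∂ℙ, Tendsto (fun n : ℕ =>
      (∑ i ∈ range n, (z (e i) ω) ^ 2) / n) atTop (nhds 1) := by
    have h := strong_law_ae_real (fun n ω => (z (e n) ω) ^ 2) (hz_mom (e 0)).1
      (fun i j hij => by
        exact ((hindep.indepFun (show (Sum.inl (e i) : ℕ ⊕ ℕ) ≠ Sum.inl (e j) by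
          simp [he_inj.ne hij])).comp
          (measurable_id.pow_const 2) (measurable_id.pow_const 2)))
      (fun i => (hident_z (e i) (e 0)).comp (measurable_id.pow_const 2))
    rwa [(hz_mom (e 0)).2.1] at h
  have E4 : ∀ᵐ ω ∂ℙ, Tendsto (fun n : ℕ =>
      (∑ i ∈ range n, z (e i) ω * z' (e i) ω) / n) atTop (nhds 0) := by
    have h := strong_law_ae_real (fun n ω => z (e n) ω * z' (e n) ω) (hzz'_int (e 0))
      (fun i j hij => by
        exact ((hpair_indep (e i) (e j) (he_inj.ne hij)).comp hmul_meas hmul_meas))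
      (fun i => (hpair_ident (e i) (e 0)).comp hmul_meas)
    rwa [hzz'_exp (e 0)] at h
  have E5 : ∀ᵐ ω ∂ℙ, Tendsto (fun n : ℕ =>
      (∑ i ∈ range n, (z (i + 1) ω - z' (i + 1) ω) ^ 2) / n) atTop (nhds 2) := by
    have h := strong_law_ae_real (fun n ω => (z (n + 1) ω - z' (n + 1) ω) ^ 2)
      (hsub_int (0 + 1))
      (fun i j hij => by
        exact ((hpair_indep (i + 1) (j + 1) (by omega)).comp hsubsq_meas hsubsq_meas))
      (fun i => (hpair_ident (i + 1) (0 + 1)).comp hsubsq_meas)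
    rwa [hsub_exp (0 + 1)] at h
  -- deterministic helper limits
  have hsqrtK : Tendsto (fun m => Real.sqrt (τ m) * ((K m : ℝ) / m)) atTop (nhds 0) := by
    have hu : Tendsto (fun m => ((K m : ℝ) * τ m / m) * ((K m : ℝ) / m)) atTop (nhds (r * 0)) :=
      hr.mul hK0
    rw [mul_zero] at hu
    have h := (Real.continuous_sqrt.tendsto 0).comp hu
    rw [Real.sqrt_zero] at h
    refine h.congr fun m => ?_
    show Real.sqrt (((K m : ℝ) * τ m / m) * ((K m : ℝ) / m)) = _
    rw [show ((K m : ℝ) * τ m / m) * ((K m : ℝ) / m) = τ m * ((K m : ℝ) / m) ^ 2 by ring,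
      Real.sqrt_mul (hτpos m).le, Real.sqrt_sq (div_nonneg (Nat.cast_nonneg _) (Nat.cast_nonneg _))]
  -- sum reindexing lemmas
  have hsum_out : ∀ (g : ℕ → ℝ) m, (∑ i ∈ Iout m, g i) = ∑ n ∈ range (K m), g (e n) := by
    intro g m
    rw [show Iout m = (range (K m)).image e from he_im m]
    exact Finset.sum_image (fun a _ b _ h => he_inj h)
  have hsum_Icc : ∀ (g : ℕ → ℝ) m, (∑ i ∈ Finset.Icc 1 m, g i) = ∑ n ∈ range m, g (n + 1) := by
    intro g m
    rw [← Finset.Ico_add_one_right_eq_Icc, Finset.sum_Ico_eq_sum_range]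
    exact Finset.sum_congr (by norm_num) fun i _ => by rw [Nat.add_comm]
  have hsplit : ∀ (g h : ℕ → ℝ) m, (∑ i ∈ Finset.Icc 1 m, if i ∈ Iout m then g i else h i)
      = (∑ i ∈ Iout m, g i) + ((∑ i ∈ Finset.Icc 1 m, h i) - ∑ i ∈ Iout m, h i) := by
    intro g h m
    rw [Finset.sum_ite]
    have hfil1 : (Finset.Icc 1 m).filter (fun i => i ∈ Iout m) = Iout m := by
      rw [Finset.filter_mem_eq_inter, Finset.inter_eq_right.2 (hIsub m)]
    have hfil2 : (Finset.Icc 1 m).filter (fun i => ¬ i ∈ Iout m) = Finset.Icc 1 m \ Iout m :=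
      (Finset.sdiff_eq_filter _ _).symm
    rw [hfil1, hfil2, Finset.sum_sdiff_eq_sub (hIsub m)]
  -- combine
  filter_upwards [E1, E2, E3, E4, E5] with ω h1 h2 h3 h4 h5
  have c2 := h2.comp hKinf
  have c3 := h3.comp hKinf
  have c4 := h4.comp hKinf
  have hev : ∀ᶠ m : ℕ in atTop, 1 ≤ m ∧ 1 ≤ K m :=
    (eventually_ge_atTop 1).and (hKinf.eventually (eventually_ge_atTop 1))
  constructor
  · -- first limit
    have hlim : Tendsto (fun m =>
        ((K m : ℝ) * τ m / m) * ((∑ n ∈ range (K m), (z' (e n) ω) ^ 2) / (K m : ℝ))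
        + σ ^ 2 * ((∑ i ∈ range m, (z' (i + 1) ω) ^ 2) / m)
        - σ ^ 2 * (((K m : ℝ) / m) * ((∑ n ∈ range (K m), (z' (e n) ω) ^ 2) / (K m : ℝ))))
        atTop (nhds (r * 1 + σ ^ 2 * 1 - σ ^ 2 * (0 * 1))) :=
      ((hr.mul c2).add (tendsto_const_nhds.mul h1)).sub
        (tendsto_const_nhds.mul (hK0.mul c2))
    have hval : r * 1 + σ ^ 2 * 1 - σ ^ 2 * (0 * 1) = r + σ ^ 2 := by ring
    rw [hval] at hlim
    refine hlim.congr' ?_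
    filter_upwards [hev] with m hm
    obtain ⟨hm1, hK1⟩ := hm
    have hm0 : (m : ℝ) ≠ 0 := by
      have h' : 0 < m := hm1
      exact_mod_cast h'.ne'
    have hKm0 : ((K m : ℕ) : ℝ) ≠ 0 := by
      have h'' : 0 < K m := hK1
      exact_mod_cast h''.ne'
    have h0 : ∀ i, (if i ∈ Iout m then Real.sqrt (τ m) * z' i ω else σ * z' i ω) ^ 2
        = if i ∈ Iout m then τ m * (z' i ω) ^ 2 else σ ^ 2 * (z' i ω) ^ 2 := by
      intro i
      split_ifs
      · rw [mul_pow, Real.sq_sqrt (hτpos m).le]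
      · rw [mul_pow]
    have hS : (∑ i ∈ Finset.Icc 1 m,
        (if i ∈ Iout m then Real.sqrt (τ m) * z' i ω else σ * z' i ω) ^ 2)
        = τ m * (∑ n ∈ range (K m), (z' (e n) ω) ^ 2)
          + (σ ^ 2 * (∑ i ∈ range m, (z' (i + 1) ω) ^ 2)
            - σ ^ 2 * (∑ n ∈ range (K m), (z' (e n) ω) ^ 2)) := by
      simp only [h0]
      rw [hsplit, ← Finset.mul_sum, ← Finset.mul_sum, ← Finset.mul_sum,
        hsum_out (fun i => (z' i ω) ^ 2) m, hsum_Icc (fun i => (z' i ω) ^ 2) m]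
    rw [hS]
    field_simp
    ring
  · -- second limit
    have hlim : Tendsto (fun m =>
        σ ^ 2 * ((∑ i ∈ range m, (z (i + 1) ω - z' (i + 1) ω) ^ 2) / m)
        - 2 * σ * ((Real.sqrt (τ m) * ((K m : ℝ) / m))
            * ((∑ n ∈ range (K m), z (e n) ω * z' (e n) ω) / (K m : ℝ)))
        + ((K m : ℝ) * τ m / m) * ((∑ n ∈ range (K m), (z' (e n) ω) ^ 2) / (K m : ℝ))
        + 2 * σ ^ 2 * (((K m : ℝ) / m)
            * ((∑ n ∈ range (K m), z (e n) ω * z' (e n) ω) / (K m : ℝ)))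
        - σ ^ 2 * (((K m : ℝ) / m) * ((∑ n ∈ range (K m), (z' (e n) ω) ^ 2) / (K m : ℝ))))
        atTop (nhds (σ ^ 2 * 2 - 2 * σ * (0 * 0) + r * 1 + 2 * σ ^ 2 * (0 * 0)
          - σ ^ 2 * (0 * 1))) :=
      (((((tendsto_const_nhds.mul h5).sub
        (tendsto_const_nhds.mul (hsqrtK.mul c4))).add (hr.mul c2)).add
        (tendsto_const_nhds.mul (hK0.mul c4))).sub (tendsto_const_nhds.mul (hK0.mul c2)))
    have hval : σ ^ 2 * 2 - 2 * σ * (0 * 0) + r * 1 + 2 * σ ^ 2 * (0 * 0) - σ ^ 2 * (0 * 1)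
        = r + 2 * σ ^ 2 := by ring
    rw [hval] at hlim
    refine hlim.congr' ?_
    filter_upwards [hev] with m hm
    obtain ⟨hm1, hK1⟩ := hm
    have hm0 : (m : ℝ) ≠ 0 := by
      have : 0 < m := hm1
      exact_mod_cast this.ne'
    have hKm0 : ((K m : ℕ) : ℝ) ≠ 0 := by
      have h'' : 0 < K m := hK1
      exact_mod_cast h''.ne'
    have h0 : ∀ i, (σ * z i ω -
        (if i ∈ Iout m then Real.sqrt (τ m) * z' i ω else σ * z' i ω)) ^ 2
        = if i ∈ Iout m then (σ * z i ω - Real.sqrt (τ m) * z' i ω) ^ 2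
          else (σ * z i ω - σ * z' i ω) ^ 2 := by
      intro i
      split_ifs <;> rfl
    have h0a : ∀ i, (σ * z i ω - Real.sqrt (τ m) * z' i ω) ^ 2
        = σ ^ 2 * (z i ω) ^ 2 - (2 * σ * Real.sqrt (τ m)) * (z i ω * z' i ω)
          + τ m * (z' i ω) ^ 2 := by
      intro i
      linear_combination (z' i ω ^ 2) * Real.sq_sqrt (hτpos m).le
    have h0c : ∀ i : ℕ, (σ * z i ω - σ * z' i ω) ^ 2
        = σ ^ 2 * ((z i ω) ^ 2) - (2 * σ ^ 2) * (z i ω * z' i ω) + σ ^ 2 * ((z' i ω) ^ 2) := by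
      intro i; ring
    have hSa : (∑ i ∈ Iout m, (σ * z i ω - Real.sqrt (τ m) * z' i ω) ^ 2)
        = σ ^ 2 * (∑ n ∈ range (K m), (z (e n) ω) ^ 2)
          - (2 * σ * Real.sqrt (τ m)) * (∑ n ∈ range (K m), z (e n) ω * z' (e n) ω)
          + τ m * (∑ n ∈ range (K m), (z' (e n) ω) ^ 2) := by
      simp only [h0a]
      rw [Finset.sum_add_distrib, Finset.sum_sub_distrib, ← Finset.mul_sum, ← Finset.mul_sum,
        ← Finset.mul_sum, hsum_out (fun i => (z i ω) ^ 2) m,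
        hsum_out (fun i => z i ω * z' i ω) m, hsum_out (fun i => (z' i ω) ^ 2) m]
    have hSb : (∑ i ∈ Finset.Icc 1 m, (σ * z i ω - σ * z' i ω) ^ 2)
        = σ ^ 2 * (∑ i ∈ range m, (z (i + 1) ω - z' (i + 1) ω) ^ 2) := by
      have hb : ∀ i : ℕ, (σ * z i ω - σ * z' i ω) ^ 2 = σ ^ 2 * (z i ω - z' i ω) ^ 2 := by
        intro i; ring
      simp only [hb]
      rw [← Finset.mul_sum, hsum_Icc (fun i => (z i ω - z' i ω) ^ 2) m]
    have hSc : (∑ i ∈ Iout m, (σ * z i ω - σ * z' i ω) ^ 2)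
        = σ ^ 2 * (∑ n ∈ range (K m), (z (e n) ω) ^ 2)
          - (2 * σ ^ 2) * (∑ n ∈ range (K m), z (e n) ω * z' (e n) ω)
          + σ ^ 2 * (∑ n ∈ range (K m), (z' (e n) ω) ^ 2) := by
      simp only [h0c]
      rw [Finset.sum_add_distrib, Finset.sum_sub_distrib, ← Finset.mul_sum, ← Finset.mul_sum,
        ← Finset.mul_sum, hsum_out (fun i => (z i ω) ^ 2) m,
        hsum_out (fun i => z i ω * z' i ω) m, hsum_out (fun i => (z' i ω) ^ 2) m]
    have hS : (∑ i ∈ Finset.Icc 1 m, (σ * z i ω -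
        (if i ∈ Iout m then Real.sqrt (τ m) * z' i ω else σ * z' i ω)) ^ 2)
        = (∑ i ∈ Iout m, (σ * z i ω - Real.sqrt (τ m) * z' i ω) ^ 2)
          + ((∑ i ∈ Finset.Icc 1 m, (σ * z i ω - σ * z' i ω) ^ 2)
            - ∑ i ∈ Iout m, (σ * z i ω - σ * z' i ω) ^ 2) := by
      simp only [h0]
      exact hsplit _ _ m
    rw [hS, hSa, hSb, hSc]
    field_simp
    ring
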